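/- arXiv:2006.16461 — 7 statements merged into one kernel-verified Lean document; each statement's English description precedes it below -/
import Mathlib

section
/- For every integer n ≥ 2, the n-th Catalan number satisfies the recurrence C_n = Σ_{k=1}^{n} (-1)^{k+1} [ binom(2n-k, k) + binom(2n-k-1, k-1) ] · C_{n-k}. -/
/-- Auxiliary sum: `B m j = ∑_{k=0}^{j} (-1)^k C(m-k, k) * catalan (j-k)`. -/
def kaplanskyB (m j : ℕ) : ℤ :=
  ∑ k ∈ Finset.range (j + 1),
    (-1 : ℤ) ^ k * (Nat.choose (m - k) k : ℤ) * (catalan (j - k) : ℤ)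

lemma kaplansky_pascal (m k : ℕ) :
    Nat.choose (m + 1 - k) (k + 1) = Nat.choose (m - k) (k + 1) + Nat.choose (m - k) k := by
  rcases le_or_gt k m with h | h
  · rw [Nat.succ_sub h, Nat.choose_succ_succ']
    omega
  · have e1 : m + 1 - k = 0 := by omega
    have e2 : m - k = 0 := by omega
    have c1 : Nat.choose 0 (k + 1) = 0 := Nat.choose_eq_zero_of_lt (by omega)
    have c2 : Nat.choose 0 k = 0 := Nat.choose_eq_zero_of_lt (by omega)
    rw [e1, e2, c1, c2]

/-- `catalan j = C(2j, j) - C(2j, j+1)` (in ℤ). -/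
lemma catalan_eq_choose_sub_choose (j : ℕ) :
    (catalan j : ℤ) = (Nat.choose (2 * j) j : ℤ) - (Nat.choose (2 * j) (j + 1) : ℤ) := by
  have h1 : (j + 1) * catalan j = Nat.centralBinom j := succ_mul_catalan_eq_centralBinom j
  have h1' : ((j : ℤ) + 1) * (catalan j : ℤ) = (Nat.choose (2 * j) j : ℤ) := by
    have := congrArg (Nat.cast : ℕ → ℤ) h1
    rw [Nat.centralBinom] at this
    push_cast at this
    linarith
  have h2 : Nat.choose (2 * j) (j + 1) * (j + 1) = Nat.choose (2 * j) j * (2 * j - j) :=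
    Nat.choose_succ_right_eq (2 * j) j
  have h2' : (Nat.choose (2 * j) (j + 1) : ℤ) * ((j : ℤ) + 1)
      = (Nat.choose (2 * j) j : ℤ) * (j : ℤ) := by
    have := congrArg (Nat.cast : ℕ → ℤ) h2
    rw [show 2 * j - j = j by omega] at this
    push_cast at this
    linarith
  have hne : ((j : ℤ) + 1) ≠ 0 := by positivity
  apply mul_left_cancel₀ hne
  rw [h1']
  nlinarith [h2']

/-- `catalan j = C(2j-1, j) - C(2j-1, j+1)` for `j ≥ 1` (in ℤ). -/
lemma catalan_eq_choose_sub_choose' (j : ℕ) (hj : 1 ≤ j) :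
    (catalan j : ℤ) = (Nat.choose (2 * j - 1) j : ℤ) - (Nat.choose (2 * j - 1) (j + 1) : ℤ) := by
  obtain ⟨j', rfl⟩ : ∃ j', j = j' + 1 := ⟨j - 1, by omega⟩
  have e : 2 * (j' + 1) - 1 = 2 * j' + 1 := by omega
  rw [e, catalan_eq_choose_sub_choose]
  have p1 : Nat.choose (2 * (j' + 1)) (j' + 1) =
      Nat.choose (2 * j' + 1) j' + Nat.choose (2 * j' + 1) (j' + 1) := by
    rw [show 2 * (j' + 1) = (2 * j' + 1) + 1 by omega, Nat.choose_succ_succ']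
  have p2 : Nat.choose (2 * (j' + 1)) (j' + 2) =
      Nat.choose (2 * j' + 1) (j' + 1) + Nat.choose (2 * j' + 1) (j' + 2) := by
    rw [show 2 * (j' + 1) = (2 * j' + 1) + 1 by omega,
      show j' + 2 = (j' + 1) + 1 by omega, Nat.choose_succ_succ']
  have sym : Nat.choose (2 * j' + 1) j' = Nat.choose (2 * j' + 1) (j' + 1) := by
    have h := Nat.choose_symm (show j' + 1 ≤ 2 * j' + 1 by omega)
    rw [show 2 * j' + 1 - (j' + 1) = j' by omega] at h
    exact h
  rw [p1, p2, sym]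
  push_cast
  ring

/-- Base case `m = 0` of the sum. -/
lemma kaplanskyB_zero (j : ℕ) : kaplanskyB 0 j = (catalan j : ℤ) := by
  unfold kaplanskyB
  rw [Finset.sum_eq_single_of_mem 0 (by simp)]
  · simp
  · intro k _ hk
    have hk' : 1 ≤ k := Nat.one_le_iff_ne_zero.mpr hk
    rw [show 0 - k = 0 by omega, Nat.choose_eq_zero_of_lt (by omega)]
    simp

/-- Base case `m = 1` of the sum. -/
lemma kaplanskyB_one (j : ℕ) : kaplanskyB 1 j = (catalan j : ℤ) := by
  unfold kaplanskyB
  rw [Finset.sum_eq_single_of_mem 0 (by simp)]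
  · simp
  · intro k _ hk
    have hk' : 1 ≤ k := Nat.one_le_iff_ne_zero.mpr hk
    rw [show 1 - k = 0 by omega, Nat.choose_eq_zero_of_lt (by omega)]
    simp

/-- Pascal-type recurrence for the sums. -/
lemma kaplanskyB_rec (m j : ℕ) :
    kaplanskyB (m + 2) (j + 1) = kaplanskyB (m + 1) (j + 1) - kaplanskyB m j := by
  unfold kaplanskyB
  rw [Finset.sum_range_succ' _ (j + 1), Finset.sum_range_succ' _ (j + 1)]
  have key : ∀ k ∈ Finset.range (j + 1),
      (-1 : ℤ) ^ (k + 1) * (Nat.choose (m + 2 - (k + 1)) (k + 1) : ℤ)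
          * (catalan (j + 1 - (k + 1)) : ℤ)
        = (-1 : ℤ) ^ (k + 1) * (Nat.choose (m + 1 - (k + 1)) (k + 1) : ℤ)
            * (catalan (j + 1 - (k + 1)) : ℤ)
          - (-1 : ℤ) ^ k * (Nat.choose (m - k) k : ℤ) * (catalan (j - k) : ℤ) := by
    intro k _
    have e1 : m + 2 - (k + 1) = m + 1 - k := by omega
    have e2 : m + 1 - (k + 1) = m - k := by omega
    have e3 : j + 1 - (k + 1) = j - k := by omega
    rw [e1, e2, e3, kaplansky_pascal m k]
    push_cast
    ring
  rw [Finset.sum_congr rfl key, Finset.sum_sub_distrib]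
  simp
  ring

/-- Key closed form: for `m ≤ 2j`,
`∑_{k=0}^{j} (-1)^k C(m-k,k) catalan (j-k) = C(2j-m, j) - C(2j-m, j+1)`. -/
lemma kaplanskyB_eq (m : ℕ) : ∀ j : ℕ, m ≤ 2 * j →
    kaplanskyB m j = (Nat.choose (2 * j - m) j : ℤ) - (Nat.choose (2 * j - m) (j + 1) : ℤ) := by
  induction m using Nat.strong_induction_on with
  | _ m ih =>
    match m with
    | 0 =>
      intro j _
      rw [kaplanskyB_zero, Nat.sub_zero, catalan_eq_choose_sub_choose]
    | 1 =>
      intro j hj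
      rw [kaplanskyB_one, catalan_eq_choose_sub_choose' j (by omega)]
    | (m + 2) =>
      intro j hj
      obtain ⟨j', rfl⟩ : ∃ j', j = j' + 1 := ⟨j - 1, by omega⟩
      rw [kaplanskyB_rec, ih (m + 1) (by omega) (j' + 1) (by omega),
        ih m (by omega) j' (by omega)]
      obtain ⟨d, hd⟩ : ∃ d, 2 * j' = m + d := ⟨2 * j' - m, by omega⟩
      rw [show 2 * (j' + 1) - (m + 1) = d + 1 by omega,
        show 2 * (j' + 1) - (m + 2) = d by omega,
        show 2 * j' - m = d by omega,
        Nat.choose_succ_succ' d j',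
        show j' + 1 + 1 = j' + 2 by rfl,
        Nat.choose_succ_succ' d (j' + 1)]
      push_cast
      ring

/-- Lemma 4.2: the Catalan numbers satisfy the Kaplansky-coefficient recurrence. -/
theorem catalan_kaplansky_recurrence (n : ℕ) (hn : 2 ≤ n) :
    (catalan n : ℤ) =
      ∑ k ∈ Finset.Icc 1 n, (-1 : ℤ) ^ (k + 1) *
        ((Nat.choose (2 * n - k) k + Nat.choose (2 * n - k - 1) (k - 1) : ℕ) : ℤ) *
        (catalan (n - k) : ℤ) := by
  have hB1 : kaplanskyB (2 * n) n = 0 := by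
    rw [kaplanskyB_eq (2 * n) n le_rfl, Nat.sub_self,
      Nat.choose_eq_zero_of_lt (by omega), Nat.choose_eq_zero_of_lt (by omega)]
    simp
  have hB2 : kaplanskyB (2 * n - 2) (n - 1) = 0 := by
    rw [kaplanskyB_eq (2 * n - 2) (n - 1) (by omega),
      show 2 * (n - 1) - (2 * n - 2) = 0 by omega,
      Nat.choose_eq_zero_of_lt (by omega), Nat.choose_eq_zero_of_lt (by omega)]
    simp
  -- rewrite the Icc-sum as a range-sum
  have hIcc : ∑ k ∈ Finset.Icc 1 n, (-1 : ℤ) ^ (k + 1) *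
        ((Nat.choose (2 * n - k) k + Nat.choose (2 * n - k - 1) (k - 1) : ℕ) : ℤ) *
        (catalan (n - k) : ℤ)
      = ∑ i ∈ Finset.range n, (-1 : ℤ) ^ (i + 2) *
        ((Nat.choose (2 * n - (i + 1)) (i + 1)
          + Nat.choose (2 * n - (i + 1) - 1) i : ℕ) : ℤ) *
        (catalan (n - (i + 1)) : ℤ) := by
    rw [show Finset.Icc 1 n = Finset.Ico 1 (n + 1) by rw [Finset.Ico_add_one_right_eq_Icc],
      Finset.sum_Ico_eq_sum_range]
    refine Finset.sum_congr (by rw [show n + 1 - 1 = n by omega]) ?_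
    intro i _
    rw [show 1 + i = i + 1 by omega, show i + 1 + 1 = i + 2 by rfl,
      show (i + 1) - 1 = i by omega]
  rw [hIcc]
  -- split into the two B-sums
  have split : ∑ i ∈ Finset.range n, (-1 : ℤ) ^ (i + 2) *
        ((Nat.choose (2 * n - (i + 1)) (i + 1)
          + Nat.choose (2 * n - (i + 1) - 1) i : ℕ) : ℤ) *
        (catalan (n - (i + 1)) : ℤ)
      = (∑ i ∈ Finset.range n, (-1 : ℤ) ^ (i + 2) *
          (Nat.choose (2 * n - (i + 1)) (i + 1) : ℤ) * (catalan (n - (i + 1)) : ℤ))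
        + (∑ i ∈ Finset.range n, (-1 : ℤ) ^ i *
          (Nat.choose (2 * n - 2 - i) i : ℤ) * (catalan (n - 1 - i) : ℤ)) := by
    rw [← Finset.sum_add_distrib]
    refine Finset.sum_congr rfl ?_
    intro i hi
    rw [show 2 * n - (i + 1) - 1 = 2 * n - 2 - i by omega,
      show n - (i + 1) = n - 1 - i by omega]
    push_cast
    ring
  rw [split]
  -- second sum is B (2n-2) (n-1)
  have hsnd : ∑ i ∈ Finset.range n, (-1 : ℤ) ^ i *
        (Nat.choose (2 * n - 2 - i) i : ℤ) * (catalan (n - 1 - i) : ℤ)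
      = kaplanskyB (2 * n - 2) (n - 1) := by
    unfold kaplanskyB
    rw [show n - 1 + 1 = n by omega]
  -- first sum is catalan n - B (2n) n
  have hfst : ∑ i ∈ Finset.range n, (-1 : ℤ) ^ (i + 2) *
        (Nat.choose (2 * n - (i + 1)) (i + 1) : ℤ) * (catalan (n - (i + 1)) : ℤ)
      = (catalan n : ℤ) - kaplanskyB (2 * n) n := by
    unfold kaplanskyB
    rw [Finset.sum_range_succ' _ n]
    simp only [Nat.sub_zero, pow_zero, Nat.choose_zero_right, Nat.cast_one]
    have : ∀ i ∈ Finset.range n,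
        (-1 : ℤ) ^ (i + 2) * (Nat.choose (2 * n - (i + 1)) (i + 1) : ℤ)
          * (catalan (n - (i + 1)) : ℤ)
        = -((-1 : ℤ) ^ (i + 1) * (Nat.choose (2 * n - (i + 1)) (i + 1) : ℤ)
          * (catalan (n - (i + 1)) : ℤ)) := by
      intro i _
      ring
    rw [Finset.sum_congr rfl this, Finset.sum_neg_distrib]
    ring
  rw [hfst, hsnd, hB1, hB2]
  ring
end

section
/- For every integer n ≥ 1, we have C_n · (n+1) = Σ_{k=1}^{n} (-1)^{k+1} [ binom(2n-k, k) + binom(2n-k-1, k-1) ] · C_{n-k} · (n-k+1). Equivalently, binom(2n, n) = Σ_{k=1}^{n} (-1)^{k+1} [ binom(2n-k, k) + binom(2n-k-1, k-1) ] · binom(2n-2k, n-k). -/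
open Finset

open Finset

lemma neg_one_pow_sub (n j : ℕ) (h : j ≤ n) : (-1:ℤ)^(n-j) = (-1)^n * (-1)^j := by
  rw [← pow_add]
  rcases Nat.even_or_odd (n+j) with he | ho
  · rw [Even.neg_one_pow he, Even.neg_one_pow (by rw [Nat.even_iff] at he ⊢; omega)]
  · rw [Odd.neg_one_pow ho, Odd.neg_one_pow (by rw [Nat.odd_iff] at ho ⊢; omega)]

lemma inner_orth (n a : ℕ) (ha : a ≤ n) :
    ∑ j ∈ range (n+1), (-1:ℤ)^j * (Nat.choose n j) * (Nat.choose j a) =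
      if a = n then (-1:ℤ)^n else 0 := by
  have hsplit : range (n+1) = range a ∪ Ico a (n+1) := by
    rw [range_eq_Ico, range_eq_Ico, Finset.Ico_union_Ico_eq_Ico] <;> omega
  rw [hsplit, Finset.sum_union]
  · have h1 : ∑ j ∈ range a, (-1:ℤ)^j * (Nat.choose n j) * (Nat.choose j a) = 0 := by
      apply Finset.sum_eq_zero
      intro j hj
      simp only [mem_range] at hj
      rw [Nat.choose_eq_zero_of_lt hj]
      simp
    rw [h1, zero_add, Finset.sum_Ico_eq_sum_range]
    have h2 : ∀ t ∈ range (n+1-a), (-1:ℤ)^(a+t) * (Nat.choose n (a+t)) * (Nat.choose (a+t) a)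
        = ((-1:ℤ)^a * Nat.choose n a) * ((-1:ℤ)^t * Nat.choose (n-a) t) := by
      intro t ht
      simp only [mem_range] at ht
      have key := Nat.choose_mul (n := n) (k := a+t) (s := a) (by omega)
      have ht2 : a + t - a = t := by omega
      rw [ht2] at key
      have e1 := congrArg (Nat.cast : ℕ → ℤ) key
      push_cast at e1
      rw [pow_add]
      linear_combination ((-1:ℤ)^a * (-1:ℤ)^t) * e1
    rw [Finset.sum_congr rfl h2, ← Finset.mul_sum]
    have h3 : n+1-a = (n-a)+1 := by omega
    rw [h3, Int.alternating_sum_range_choose]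
    by_cases h : a = n
    · subst h; simp
    · rw [if_neg (by omega), if_neg h]; ring
  · rw [Finset.disjoint_left]
    intro x hx hx'
    simp only [mem_range, mem_Ico] at *
    omega

lemma key_sum (n : ℕ) :
    ∑ j ∈ range (n+1), (-1:ℤ)^j * (Nat.choose n j) * (Nat.choose (n+j) j) = (-1:ℤ)^n := by
  have hvdm : ∀ j ∈ range (n+1), ((Nat.choose (n+j) j : ℕ) : ℤ)
      = ∑ a ∈ range (n+1), (Nat.choose n a : ℤ) * (Nat.choose j a : ℤ) := by
    intro j hj
    simp only [mem_range] at hj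
    rw [Nat.add_choose_eq n j j]
    rw [Finset.Nat.sum_antidiagonal_eq_sum_range_succ (f := fun x y => Nat.choose n x * Nat.choose j y)]
    have h1 : ∑ x ∈ range (j+1), Nat.choose n x * Nat.choose j (j - x)
        = ∑ x ∈ range (j+1), Nat.choose n x * Nat.choose j x := by
      apply Finset.sum_congr rfl
      intro x hx
      simp only [mem_range] at hx
      rw [Nat.choose_symm (by omega)]
    rw [h1]
    have hext : ∑ x ∈ range (n+1), (Nat.choose n x : ℤ) * (Nat.choose j x : ℤ)
        = ∑ x ∈ range (j+1), (Nat.choose n x : ℤ) * (Nat.choose j x : ℤ) := by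
      refine (Finset.sum_subset (Finset.range_subset_range.mpr (by omega)) ?_).symm
      intro x _ hx
      simp only [mem_range, not_lt] at hx
      rw [show Nat.choose j x = 0 from Nat.choose_eq_zero_of_lt (by omega)]
      simp
    rw [hext]; push_cast; rfl
  calc ∑ j ∈ range (n+1), (-1:ℤ)^j * (Nat.choose n j) * (Nat.choose (n+j) j)
      = ∑ j ∈ range (n+1), ∑ a ∈ range (n+1),
          (Nat.choose n a : ℤ) * ((-1:ℤ)^j * (Nat.choose n j) * (Nat.choose j a)) := by
        refine Finset.sum_congr rfl fun j hj => ?_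
        rw [hvdm j hj, Finset.mul_sum]
        exact Finset.sum_congr rfl fun a _ => by ring
    _ = ∑ a ∈ range (n+1), (Nat.choose n a : ℤ) *
          ∑ j ∈ range (n+1), ((-1:ℤ)^j * (Nat.choose n j) * (Nat.choose j a)) := by
        rw [Finset.sum_comm]
        exact Finset.sum_congr rfl fun a _ => by rw [Finset.mul_sum]
    _ = (-1:ℤ)^n := by
        have h : ∀ a ∈ range (n+1), (Nat.choose n a : ℤ) *
            (∑ j ∈ range (n+1), ((-1:ℤ)^j * (Nat.choose n j) * (Nat.choose j a)))
            = if a = n then (-1:ℤ)^n else 0 := by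
          intro a ha
          simp only [mem_range] at ha
          rw [inner_orth n a (by omega)]
          by_cases h : a = n
          · subst h; simp
          · simp [h]
        rw [Finset.sum_congr rfl h, Finset.sum_ite_eq' (range (n+1)) n (fun _ => (-1:ℤ)^n)]
        simp

lemma identA (n : ℕ) :
    ∑ k ∈ range (n+1), (-1:ℤ)^k * (Nat.choose (2*n-k) k) * (Nat.choose (2*n-2*k) (n-k)) = 1 := by
  rw [← Finset.sum_range_reflect]
  have hcong : ∀ j ∈ range (n+1),
      (-1:ℤ)^(n+1-1-j) * (Nat.choose (2*n-(n+1-1-j)) (n+1-1-j)) * (Nat.choose (2*n-2*(n+1-1-j)) (n-(n+1-1-j)))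
      = (-1:ℤ)^n * ((-1:ℤ)^j * (Nat.choose n j) * (Nat.choose (n+j) j)) := by
    intro j hj
    simp only [mem_range] at hj
    have e0 : n+1-1-j = n-j := by omega
    have e1 : 2*n-(n-j) = n+j := by omega
    have e2 : 2*n-2*(n-j) = 2*j := by omega
    have e3 : n-(n-j) = j := by omega
    rw [e0, e1, e2, e3]
    have e4 : Nat.choose (n+j) (n-j) = Nat.choose (n+j) (2*j) := by
      rw [← Nat.choose_symm (show 2*j ≤ n+j by omega)]
      congr 1
      omega
    have key := Nat.choose_mul (n := n+j) (k := 2*j) (s := j) (by omega)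
    have f1 : n+j-j = n := by omega
    have f2 : 2*j-j = j := by omega
    rw [f1, f2] at key
    have e5 := congrArg (Nat.cast : ℕ → ℤ) key
    push_cast at e5
    rw [e4, neg_one_pow_sub n j (by omega)]
    linear_combination ((-1:ℤ)^n * (-1:ℤ)^j) * e5
  rw [Finset.sum_congr rfl hcong, ← Finset.mul_sum, key_sum, ← pow_add]
  rw [← two_mul, pow_mul]
  norm_num

lemma Sa (n : ℕ) :
    ∑ k ∈ Icc 1 n, (-1:ℤ)^(k+1) * (Nat.choose (2*n-k) k) * (Nat.choose (2*n-2*k) (n-k))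
      = (Nat.choose (2*n) n : ℤ) - 1 := by
  have hA := identA n
  rw [Finset.sum_range_succ'] at hA
  simp only [Nat.sub_zero, Nat.mul_sub, mul_zero, pow_zero, Nat.choose_zero_right, Nat.cast_one,
    one_mul, mul_one] at hA
  have hIcc : ∑ k ∈ Icc 1 n, (-1:ℤ)^(k+1) * (Nat.choose (2*n-k) k) * (Nat.choose (2*n-2*k) (n-k))
      = ∑ i ∈ range n, (-1:ℤ)^(1+i+1) * (Nat.choose (2*n-(1+i)) (1+i)) * (Nat.choose (2*n-2*(1+i)) (n-(1+i))) := by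
    rw [show Icc 1 n = Ico 1 (n+1) by rfl, Finset.sum_Ico_eq_sum_range]
    simp only [Nat.add_sub_cancel]
  rw [hIcc]
  have hterm : ∀ i ∈ range n,
      (-1:ℤ)^(1+i+1) * (Nat.choose (2*n-(1+i)) (1+i)) * (Nat.choose (2*n-2*(1+i)) (n-(1+i)))
      = -((-1:ℤ)^(i+1) * (Nat.choose (2*n-(i+1)) (i+1)) * (Nat.choose (2*n-2*(i+1)) (n-(i+1)))) := by
    intro i _
    rw [show 1+i+1 = (i+1)+1 by omega, show 1+i = i+1 by omega, pow_succ]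
    ring
  rw [Finset.sum_congr rfl hterm, Finset.sum_neg_distrib]
  have : ∑ i ∈ range n, (-1:ℤ)^(i+1) * (Nat.choose (2*n-(i+1)) (i+1)) * (Nat.choose (2*n-2*(i+1)) (n-(i+1)))
      = 1 - (Nat.choose (2*n) n : ℤ) := by linarith [hA]
  rw [this]
  ring

lemma Sb (n : ℕ) (hn : 1 ≤ n) :
    ∑ k ∈ Icc 1 n, (-1:ℤ)^(k+1) * (Nat.choose (2*n-k-1) (k-1)) * (Nat.choose (2*n-2*k) (n-k)) = 1 := by
  obtain ⟨m, rfl⟩ : ∃ m, n = m + 1 := ⟨n - 1, by omega⟩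
  rw [show Icc 1 (m+1) = Ico 1 (m+1+1) by rfl, Finset.sum_Ico_eq_sum_range]
  simp only [Nat.add_sub_cancel]
  have hterm : ∀ t ∈ range (m+1),
      (-1:ℤ)^(1+t+1) * (Nat.choose (2*(m+1)-(1+t)-1) (1+t-1)) * (Nat.choose (2*(m+1)-2*(1+t)) ((m+1)-(1+t)))
      = (-1:ℤ)^t * (Nat.choose (2*m-t) t) * (Nat.choose (2*m-2*t) (m-t)) := by
    intro t _
    have e1 : 2*(m+1)-(1+t)-1 = 2*m-t := by omega
    have e2 : 1+t-1 = t := by omega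
    have e3 : 2*(m+1)-2*(1+t) = 2*m-2*t := by omega
    have e4 : (m+1)-(1+t) = m-t := by omega
    have e5 : (-1:ℤ)^(1+t+1) = (-1:ℤ)^t := by
      rw [show 1+t+1 = t+2 by omega, pow_add]
      norm_num
    rw [e1, e2, e3, e4, e5]
  rw [Finset.sum_congr rfl hterm, identA m]

/-- Lemma 4.3: `C_n (n+1)` satisfies the Kaplansky-coefficient recurrence;
equivalently, an identity for central binomial coefficients. -/
theorem catalan_mul_succ_recurrence (n : ℕ) (hn : 1 ≤ n) :
    ((catalan n : ℤ) * (n + 1) =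
      ∑ k ∈ Finset.Icc 1 n, (-1 : ℤ) ^ (k + 1) *
        ((Nat.choose (2 * n - k) k + Nat.choose (2 * n - k - 1) (k - 1) : ℕ) : ℤ) *
        (catalan (n - k) : ℤ) * ((n - k + 1 : ℕ) : ℤ))
    ∧
    ((Nat.choose (2 * n) n : ℤ) =
      ∑ k ∈ Finset.Icc 1 n, (-1 : ℤ) ^ (k + 1) *
        ((Nat.choose (2 * n - k) k + Nat.choose (2 * n - k - 1) (k - 1) : ℕ) : ℤ) *
        ((Nat.choose (2 * n - 2 * k) (n - k) : ℕ) : ℤ)) := by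
  have hcb : ∀ m : ℕ, (catalan m : ℤ) * ((m + 1 : ℕ) : ℤ) = ((Nat.choose (2*m) m : ℕ) : ℤ) := by
    intro m
    have h := succ_mul_catalan_eq_centralBinom m
    have h2 : (m+1) * catalan m = Nat.choose (2*m) m := h
    exact_mod_cast by rw [← h2]; ring
  have H2 : ((Nat.choose (2 * n) n : ℤ) =
      ∑ k ∈ Finset.Icc 1 n, (-1 : ℤ) ^ (k + 1) *
        ((Nat.choose (2 * n - k) k + Nat.choose (2 * n - k - 1) (k - 1) : ℕ) : ℤ) *
        ((Nat.choose (2 * n - 2 * k) (n - k) : ℕ) : ℤ)) := by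
    have hsplit : ∀ k ∈ Icc 1 n, (-1 : ℤ) ^ (k + 1) *
        ((Nat.choose (2 * n - k) k + Nat.choose (2 * n - k - 1) (k - 1) : ℕ) : ℤ) *
        ((Nat.choose (2 * n - 2 * k) (n - k) : ℕ) : ℤ)
        = (-1:ℤ)^(k+1) * (Nat.choose (2*n-k) k) * (Nat.choose (2*n-2*k) (n-k))
          + (-1:ℤ)^(k+1) * (Nat.choose (2*n-k-1) (k-1)) * (Nat.choose (2*n-2*k) (n-k)) := by
      intro k _
      push_cast
      ring
    rw [Finset.sum_congr rfl hsplit, Finset.sum_add_distrib, Sa n, Sb n hn]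
    ring
  refine ⟨?_, H2⟩
  have hL : (catalan n : ℤ) * (n + 1) = ((Nat.choose (2*n) n : ℕ) : ℤ) := by
    rw [← hcb n]; push_cast; ring
  rw [hL, H2]
  refine Finset.sum_congr rfl fun k hk => ?_
  simp only [mem_Icc] at hk
  have e : 2 * n - 2 * k = 2 * (n - k) := by omega
  rw [e, ← hcb (n-k)]
  ring
end

section
/- Let r and s be integers and define the sequence f(n) = C_n · ((r - s) · n + s) for n ≥ 0, where C_n is the n-th Catalan number. Then for every integer n ≥ 2, f(n) = Σ_{k=1}^{n} (-1)^{k+1} [ binom(2n-k, k) + binom(2n-k-1, k-1) ] · f(n-k). -/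
open Finset Polynomial

/-- The Kaplansky polynomial `∑ (-1)^k C(m-k,k) X^k (X+1)^(m-2k)`. -/
noncomputable def kapP (m : ℕ) : Polynomial ℤ :=
  ∑ k ∈ Finset.range (m + 1),
    ((-1 : ℤ) ^ k * ((m - k).choose k : ℤ)) • (X ^ k * (X + 1) ^ (m - 2 * k))

lemma kapP_rec (m : ℕ) : kapP (m + 2) = (X + 1) * kapP (m + 1) - X * kapP m := by
  have pascal : ∀ i : ℕ, (m + 1 - i).choose (i + 1) = (m - i).choose i + (m - i).choose (i + 1) := by
    intro i
    rcases le_or_gt i m with h | h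
    · rw [show m + 1 - i = (m - i) + 1 from by omega, Nat.choose_succ_succ]
    · rw [show m + 1 - i = 0 from by omega, show m - i = 0 from by omega]
      rw [Nat.choose_eq_zero_of_lt (by omega), Nat.choose_eq_zero_of_lt (by omega)]
  have hS1 : (∑ k ∈ Finset.range (m + 3),
      ((-1 : ℤ) ^ k * ((m + 1 - k).choose k : ℤ)) • (X ^ k * (X + 1) ^ (m + 2 - 2 * k)))
      = (X + 1) * kapP (m + 1) := by
    rw [Finset.sum_range_succ, show m + 1 - (m + 2) = 0 from by omega,
      Nat.choose_eq_zero_of_lt (by omega)]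
    simp only [Nat.cast_zero, mul_zero, zero_smul, add_zero]
    rw [kapP, Finset.mul_sum]
    refine Finset.sum_congr rfl fun k hk => ?_
    rcases le_or_gt (2 * k) (m + 1) with h2 | h2
    · rw [mul_smul_comm, show m + 2 - 2 * k = (m + 1 - 2 * k) + 1 from by omega, pow_succ]
      ring_nf
    · rw [Nat.choose_eq_zero_of_lt (by omega)]
      simp
  have hS2 : (∑ i ∈ Finset.range (m + 2),
      ((-1 : ℤ) ^ i * ((m - i).choose i : ℤ)) • (X ^ (i + 1) * (X + 1) ^ (m + 2 - 2 * (i + 1))))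
      = X * kapP m := by
    rw [Finset.sum_range_succ, show m - (m + 1) = 0 from by omega,
      Nat.choose_eq_zero_of_lt (by omega)]
    simp only [Nat.cast_zero, mul_zero, zero_smul, add_zero]
    rw [kapP, Finset.mul_sum]
    refine Finset.sum_congr rfl fun i hi => ?_
    rcases le_or_gt (2 * i) m with h2 | h2
    · rw [mul_smul_comm, show m + 2 - 2 * (i + 1) = m - 2 * i from by omega, pow_succ]
      ring_nf
    · rw [Nat.choose_eq_zero_of_lt (by omega)]
      simp
  rw [← hS1, ← hS2, kapP, Finset.sum_range_succ' _ (m + 2), Finset.sum_range_succ' _ (m + 2)]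
  rw [show ((-1 : ℤ) ^ 0 * ((m + 2 - 0).choose 0 : ℤ)) •
        ((X : Polynomial ℤ) ^ 0 * (X + 1) ^ (m + 2 - 2 * 0))
      = ((-1 : ℤ) ^ 0 * ((m + 1 - 0).choose 0 : ℤ)) •
        ((X : Polynomial ℤ) ^ 0 * (X + 1) ^ (m + 2 - 2 * 0)) from by norm_num]
  rw [add_sub_right_comm, ← Finset.sum_sub_distrib]
  congr 1
  refine Finset.sum_congr rfl fun i hi => ?_
  rw [show m + 2 - (i + 1) = m + 1 - i from by omega, pascal i,
    show m + 1 - (i + 1) = m - i from by omega]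
  simp only [zsmul_eq_mul]
  push_cast
  ring

lemma kapP_eq (m : ℕ) : kapP m = ∑ j ∈ Finset.range (m + 1), (X : Polynomial ℤ) ^ j := by
  induction m using Nat.twoStepInduction with
  | zero => simp [kapP]
  | one =>
    rw [kapP]
    simp [Finset.sum_range_succ]
    ring
  | more m ih1 ih2 =>
    rw [kapP_rec, ih1, ih2, Finset.sum_range_succ _ (m + 2), Finset.sum_range_succ _ (m + 1)]
    ring

lemma kapP_coeff (m j : ℕ) :
    (kapP m).coeff j = ∑ k ∈ Finset.range (m + 1), (-1 : ℤ) ^ k * ((m - k).choose k : ℤ) *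
      (if k ≤ j then (((m - 2 * k).choose (j - k) : ℕ) : ℤ) else 0) := by
  rw [kapP, Polynomial.finset_sum_coeff]
  refine Finset.sum_congr rfl fun k hk => ?_
  rw [Polynomial.coeff_smul, smul_eq_mul, Polynomial.coeff_X_pow_mul',
    Polynomial.coeff_X_add_one_pow]

lemma geom_coeff (m j : ℕ) :
    (∑ i ∈ Finset.range (m + 1), (X : Polynomial ℤ) ^ i).coeff j
      = if j ≤ m then 1 else 0 := by
  rw [Polynomial.finset_sum_coeff]
  simp only [Polynomial.coeff_X_pow]
  rw [Finset.sum_ite_eq (Finset.range (m + 1)) j (fun _ => (1 : ℤ))]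
  simp [Nat.lt_succ_iff]

lemma kap_master (m j : ℕ) :
    (∑ k ∈ Finset.range (m + 1), (-1 : ℤ) ^ k * ((m - k).choose k : ℤ) *
      (if k ≤ j then (((m - 2 * k).choose (j - k) : ℕ) : ℤ) else 0))
      = if j ≤ m then 1 else 0 := by
  rw [← kapP_coeff, kapP_eq, geom_coeff]

lemma lemI (n : ℕ) :
    ∑ k ∈ Finset.range (n + 1), (-1 : ℤ) ^ k * (((2 * n - k).choose k : ℕ) : ℤ) *
      ((n - k).centralBinom : ℤ) = 1 := by
  have h := kap_master (2 * n) n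
  rw [if_pos (by omega)] at h
  refine Eq.trans ?_ h
  refine Eq.trans ?_ (Finset.sum_subset (Finset.range_subset_range.2 (by omega : n + 1 ≤ 2 * n + 1))
    (fun k hk hnk => ?_))
  · refine Finset.sum_congr rfl fun k hk => ?_
    rw [Finset.mem_range, Nat.lt_succ_iff] at hk
    rw [if_pos hk, Nat.centralBinom_eq_two_mul_choose,
      show 2 * (n - k) = 2 * n - 2 * k from by omega]
  · rw [Finset.mem_range, Nat.lt_succ_iff] at hk
    rw [Finset.mem_range, Nat.lt_succ_iff, not_le] at hnk
    rw [Nat.choose_eq_zero_of_lt (by omega)]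
    simp

lemma choose_two_mul_sub_one (m : ℕ) (hm : 1 ≤ m) :
    (2 * m).choose (m - 1) = m * catalan m := by
  have h := Nat.choose_succ_right_eq (2 * m) (m - 1)
  rw [show m - 1 + 1 = m from by omega, show 2 * m - (m - 1) = m + 1 from by omega] at h
  have hc : (2 * m).choose m = (m + 1) * catalan m := by
    rw [succ_mul_catalan_eq_centralBinom, Nat.centralBinom_eq_two_mul_choose]
  rw [hc] at h
  have h2 : (2 * m).choose (m - 1) * (m + 1) = m * catalan m * (m + 1) := by
    rw [← h]; ring
  exact Nat.eq_of_mul_eq_mul_right (by omega) h2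

lemma lemII (n : ℕ) (hn : 1 ≤ n) :
    ∑ k ∈ Finset.range (n + 1), (-1 : ℤ) ^ k * (((2 * n - k).choose k : ℕ) : ℤ) *
      (((n - k) * catalan (n - k) : ℕ) : ℤ) = 1 := by
  have h := kap_master (2 * n) (n - 1)
  rw [if_pos (by omega)] at h
  refine Eq.trans ?_ h
  refine Eq.trans ?_ (Finset.sum_subset (Finset.range_subset_range.2 (by omega : n + 1 ≤ 2 * n + 1))
    (fun k hk hnk => ?_))
  · refine Finset.sum_congr rfl fun k hk => ?_
    rw [Finset.mem_range, Nat.lt_succ_iff] at hk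
    rcases le_or_gt k (n - 1) with hk1 | hk1
    · rw [if_pos hk1, show 2 * n - 2 * k = 2 * (n - k) from by omega,
        show n - 1 - k = n - k - 1 from by omega,
        choose_two_mul_sub_one (n - k) (by omega)]
    · rw [if_neg (by omega), show n - k = 0 from by omega]
      simp
  · rw [Finset.mem_range, Nat.lt_succ_iff] at hk
    rw [Finset.mem_range, Nat.lt_succ_iff, not_le] at hnk
    rw [Nat.choose_eq_zero_of_lt (by omega)]
    simp

lemma kap_key (r s : ℤ) (n : ℕ) (hn : 1 ≤ n) :
    ∑ k ∈ Finset.range (n + 1), (-1 : ℤ) ^ k * (((2 * n - k).choose k : ℕ) : ℤ) *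
      ((catalan (n - k) : ℤ) * ((r - s) * ((n - k : ℕ) : ℤ) + s)) = r - s := by
  have hA := lemI n
  have hB := lemII n hn
  calc ∑ k ∈ Finset.range (n + 1), (-1 : ℤ) ^ k * (((2 * n - k).choose k : ℕ) : ℤ) *
        ((catalan (n - k) : ℤ) * ((r - s) * ((n - k : ℕ) : ℤ) + s))
      = ∑ k ∈ Finset.range (n + 1),
        ((r - 2 * s) * ((-1 : ℤ) ^ k * (((2 * n - k).choose k : ℕ) : ℤ) *
            (((n - k) * catalan (n - k) : ℕ) : ℤ)) +
          s * ((-1 : ℤ) ^ k * (((2 * n - k).choose k : ℕ) : ℤ) *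
            ((n - k).centralBinom : ℤ))) := by
        refine Finset.sum_congr rfl fun k hk => ?_
        have hc : (((n - k : ℕ) : ℤ) + 1) * (catalan (n - k) : ℤ)
            = ((n - k).centralBinom : ℤ) := by
          exact_mod_cast congrArg (Nat.cast : ℕ → ℤ) (succ_mul_catalan_eq_centralBinom (n - k))
        push_cast
        linear_combination ((-1 : ℤ) ^ k * (((2 * n - k).choose k : ℕ) : ℤ) * s) * hc
    _ = (r - 2 * s) * (∑ k ∈ Finset.range (n + 1), (-1 : ℤ) ^ k *
          (((2 * n - k).choose k : ℕ) : ℤ) * (((n - k) * catalan (n - k) : ℕ) : ℤ)) +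
        s * (∑ k ∈ Finset.range (n + 1), (-1 : ℤ) ^ k *
          (((2 * n - k).choose k : ℕ) : ℤ) * ((n - k).centralBinom : ℤ)) := by
        rw [Finset.sum_add_distrib, ← Finset.mul_sum, ← Finset.mul_sum]
    _ = r - s := by rw [hA, hB]; ring

/-- The closed-form sequence `f(n) = C_n ((r-s) n + s)` satisfies the
Kaplansky-coefficient recurrence for all `n ≥ 2`. -/
theorem catalan_closed_form_recurrence (r s : ℤ) (n : ℕ) (hn : 2 ≤ n) :
    (catalan n : ℤ) * ((r - s) * (n : ℤ) + s) =
      ∑ k ∈ Finset.Icc 1 n, (-1 : ℤ) ^ (k + 1) *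
        ((Nat.choose (2 * n - k) k + Nat.choose (2 * n - k - 1) (k - 1) : ℕ) : ℤ) *
        ((catalan (n - k) : ℤ) * ((r - s) * ((n - k : ℕ) : ℤ) + s)) := by
  have hrw : ∀ i : ℕ, n - (i + 1) = n - 1 - i := fun i => by omega
  have hkey1 := kap_key r s n (by omega)
  rw [Finset.sum_range_succ'] at hkey1
  simp only [pow_zero, Nat.sub_zero, Nat.choose_zero_right, Nat.cast_one, one_mul] at hkey1
  have hkey2 := kap_key r s (n - 1) (by omega)
  rw [show n - 1 + 1 = n from by omega] at hkey2
  rw [show Finset.Icc 1 n = Finset.Ico 1 (n + 1) from (Finset.Ico_add_one_right_eq_Icc 1 n).symm,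
    Finset.sum_Ico_eq_sum_range, show n + 1 - 1 = n from by omega]
  have hsplit : ∀ i ∈ Finset.range n,
      (-1 : ℤ) ^ (1 + i + 1) *
        ((Nat.choose (2 * n - (1 + i)) (1 + i) +
          Nat.choose (2 * n - (1 + i) - 1) (1 + i - 1) : ℕ) : ℤ) *
        ((catalan (n - (1 + i)) : ℤ) * ((r - s) * ((n - (1 + i) : ℕ) : ℤ) + s))
      = -((-1 : ℤ) ^ (i + 1) * (((2 * n - (i + 1)).choose (i + 1) : ℕ) : ℤ) *
          ((catalan (n - (i + 1)) : ℤ) * ((r - s) * ((n - (i + 1) : ℕ) : ℤ) + s)))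
        + (-1 : ℤ) ^ i * (((2 * (n - 1) - i).choose i : ℕ) : ℤ) *
          ((catalan (n - 1 - i) : ℤ) * ((r - s) * ((n - 1 - i : ℕ) : ℤ) + s)) := by
    intro i hi
    rw [Finset.mem_range] at hi
    rw [show 1 + i = i + 1 from by omega, show 2 * n - (i + 1) - 1 = 2 * (n - 1) - i from by omega,
      show i + 1 - 1 = i from by omega, hrw i]
    push_cast
    ring
  rw [Finset.sum_congr rfl hsplit, Finset.sum_add_distrib, Finset.sum_neg_distrib]
  linarith [hkey1, hkey2]
end

section
/- Let r, s be integers and let f : ℕ → ℤ be any sequence satisfying f(0) = s, f(1) = r, and, for every integer n ≥ 2, f(n) = Σ_{k=1}^{n} (-1)^{k+1} [ binom(2n-k, k) + binom(2n-k-1, k-1) ] · f(n-k). Then for every n ≥ 0, f(n) = C_n · ((r - s) · n + s), where C_n is the n-th Catalan number. -/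
open Finset

/-- Integer-indexed binomial coefficient (zero for negative lower index). -/
def ich (c : ℕ) (t : ℤ) : ℤ := if 0 ≤ t then (c.choose t.toNat : ℤ) else 0

lemma ich_pascal (c : ℕ) (t : ℤ) : ich (c+1) t = ich c t + ich c (t-1) := by
  unfold ich
  rcases lt_trichotomy t 0 with h | h | h
  · rw [if_neg (by omega), if_neg (by omega), if_neg (by omega)]; ring
  · subst h; simp
  · rw [if_pos (by omega), if_pos (by omega), if_pos (by omega)]
    have ht : t.toNat = (t-1).toNat + 1 := by omega
    rw [ht, Nat.choose_succ_succ]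
    push_cast; ring

lemma BLc : ∀ (N : ℕ), ∀ (c s : ℕ),
    ∑ i ∈ range (N+1), (-1:ℤ)^i * (N.choose i : ℤ) * ((c+i).choose s : ℤ)
      = (-1)^N * ich c ((s:ℤ) - (N:ℤ)) := by
  intro N
  induction N with
  | zero =>
    intro c s
    simp [ich]
  | succ N IH =>
    intro c s
    rw [Finset.sum_range_succ']
    have hterm : ∀ i ∈ range (N+1),
        (-1:ℤ)^(i+1) * ((N+1).choose (i+1) : ℤ) * ((c+(i+1)).choose s : ℤ)
        = -((-1:ℤ)^i * (N.choose i : ℤ) * (((c+1)+i).choose s : ℤ))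
          + (-1:ℤ)^(i+1) * (N.choose (i+1) : ℤ) * ((c+(i+1)).choose s : ℤ) := by
      intro i _
      rw [Nat.choose_succ_succ]
      have : c + (i+1) = (c+1) + i := by omega
      rw [this]
      push_cast; ring
    rw [Finset.sum_congr rfl hterm, Finset.sum_add_distrib]
    have h1 : ∑ i ∈ range (N+1),
        -((-1:ℤ)^i * (N.choose i : ℤ) * (((c+1)+i).choose s : ℤ))
        = -((-1)^N * ich (c+1) ((s:ℤ) - (N:ℤ))) := by
      rw [Finset.sum_neg_distrib, IH (c+1) s]
    have h2 : ∑ i ∈ range (N+1),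
        (-1:ℤ)^(i+1) * (N.choose (i+1) : ℤ) * ((c+(i+1)).choose s : ℤ)
        = (-1)^N * ich c ((s:ℤ) - (N:ℤ)) - ((c).choose s : ℤ) := by
      have := Finset.sum_range_succ' (fun j => (-1:ℤ)^j * (N.choose j : ℤ) * ((c+j).choose s : ℤ)) (N+1)
      -- this : ∑ j ∈ range (N+2), g j = ∑ i ∈ range (N+1), g (i+1) + g 0
      have htop : ∑ j ∈ range (N+2), (-1:ℤ)^j * (N.choose j : ℤ) * ((c+j).choose s : ℤ)
          = (-1)^N * ich c ((s:ℤ) - (N:ℤ)) := by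
        rw [Finset.sum_range_succ, IH c s]
        simp [Nat.choose_succ_self]
      rw [htop] at this
      simp only [pow_zero, Nat.choose_zero_right, Nat.cast_one, one_mul, add_zero] at this
      linarith [this]
    rw [h1, h2, ich_pascal c ((s:ℤ) - (N:ℤ))]
    simp only [pow_zero, Nat.choose_zero_right, Nat.cast_one, one_mul, add_zero]
    have h3 : ((s:ℤ) - ((N:ℕ)+1:ℕ)) = (s:ℤ) - (N:ℤ) - 1 := by push_cast; ring
    rw [h3]
    ring

lemma termD (n j : ℕ) (h : j ≤ n) :
    (n+j).choose (2*j) * (2*j).choose j = n.choose j * (n+j).choose n := by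
  rw [Nat.choose_mul (show j ≤ 2*j by omega)]
  have e1 : n + j - j = n := by omega
  have e2 : 2*j - j = j := by omega
  rw [e1, e2, Nat.choose_symm_of_eq_add (show n+j = j + n by omega), mul_comm]

lemma termE (m i : ℕ) (h : i ≤ m) :
    ((m+2)+i).choose (2*i+2) * ((2*i+2).choose i) = m.choose i * ((m+2)+i).choose m := by
  rw [Nat.choose_symm_of_eq_add (show 2*i+2 = i + (i+2) by omega),
    Nat.choose_mul (show i+2 ≤ 2*i+2 by omega)]
  have e1 : m + 2 + i - (i+2) = m := by omega
  have e2 : 2*i + 2 - (i+2) = i := by omega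
  rw [e1, e2, Nat.choose_symm_of_eq_add (show m+2+i = (i+2) + m by omega), mul_comm]

lemma cat_shift (i : ℕ) :
    (catalan (i+1) : ℤ) = ((2*i+2).choose (i+1) : ℤ) - ((2*i+2).choose i : ℤ) := by
  have h1 : (i+2) * catalan (i+1) = (2*(i+1)).choose (i+1) := by
    have h := succ_mul_catalan_eq_centralBinom (i+1)
    rwa [Nat.centralBinom] at h
  have h2 : (2*i+2).choose (i+1) * (i+1) = (2*i+2).choose i * (2*i+2 - i) :=
    Nat.choose_succ_right_eq (2*i+2) i
  have h3 : (2*i+2) - i = i + 2 := by omega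
  rw [h3] at h2
  have h1' : ((i:ℤ)+2) * (catalan (i+1) : ℤ) = ((2*i+2).choose (i+1) : ℤ) := by
    have := congrArg (Nat.cast (R := ℤ)) h1
    push_cast at this ⊢
    convert this using 2
    ring_nf
  have h2' : ((2*i+2).choose (i+1) : ℤ) * ((i:ℤ)+1) = ((2*i+2).choose i : ℤ) * ((i:ℤ)+2) := by
    exact_mod_cast congrArg (Nat.cast (R := ℤ)) h2
  have hne : ((i:ℤ)+2) ≠ 0 := by positivity
  apply mul_left_cancel₀ hne
  rw [h1']
  nlinarith [h1', h2']

lemma cat_mul (j : ℕ) :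
    (j:ℤ) * (catalan j : ℤ) = ((2*j).choose j : ℤ) - (catalan j : ℤ) := by
  have h1 : (j+1) * catalan j = (2*j).choose j := by
    have := succ_mul_catalan_eq_centralBinom j
    rwa [Nat.centralBinom] at this
  have := congrArg (Nat.cast (R := ℤ)) h1
  push_cast at this
  linarith [this]

lemma Sd (n : ℕ) :
    ∑ j ∈ range (n+1), (-1:ℤ)^j * ((n+j).choose (2*j) : ℤ) * ((2*j).choose j : ℤ)
      = (-1)^n := by
  have hstep : ∀ j ∈ range (n+1),
      (-1:ℤ)^j * ((n+j).choose (2*j) : ℤ) * ((2*j).choose j : ℤ)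
      = (-1:ℤ)^j * (n.choose j : ℤ) * ((n+j).choose n : ℤ) := by
    intro j hj
    have hj' : j ≤ n := by simpa using Nat.lt_succ_iff.mp (mem_range.mp hj)
    have := termD n j hj'
    have h2 : ((n+j).choose (2*j) : ℤ) * ((2*j).choose j : ℤ)
        = (n.choose j : ℤ) * ((n+j).choose n : ℤ) := by exact_mod_cast congrArg (Nat.cast (R := ℤ)) this
    calc (-1:ℤ)^j * ((n+j).choose (2*j) : ℤ) * ((2*j).choose j : ℤ)
        = (-1:ℤ)^j * (((n+j).choose (2*j) : ℤ) * ((2*j).choose j : ℤ)) := by ring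
      _ = (-1:ℤ)^j * ((n.choose j : ℤ) * ((n+j).choose n : ℤ)) := by rw [h2]
      _ = (-1:ℤ)^j * (n.choose j : ℤ) * ((n+j).choose n : ℤ) := by ring
  rw [Finset.sum_congr rfl hstep, BLc n n n]
  simp [ich]

lemma SE (m : ℕ) :
    ∑ i ∈ range (m+1), (-1:ℤ)^i * (((m+2)+i).choose (2*i+2) : ℤ) * ((2*i+2).choose i : ℤ)
      = (-1)^m := by
  have hstep : ∀ i ∈ range (m+1),
      (-1:ℤ)^i * (((m+2)+i).choose (2*i+2) : ℤ) * ((2*i+2).choose i : ℤ)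
      = (-1:ℤ)^i * (m.choose i : ℤ) * (((m+2)+i).choose m : ℤ) := by
    intro i hi
    have hi' : i ≤ m := by simpa using Nat.lt_succ_iff.mp (mem_range.mp hi)
    have h2 : (((m+2)+i).choose (2*i+2) : ℤ) * ((2*i+2).choose i : ℤ)
        = (m.choose i : ℤ) * (((m+2)+i).choose m : ℤ) := by
      exact_mod_cast congrArg (Nat.cast (R := ℤ)) (termE m i hi')
    calc (-1:ℤ)^i * (((m+2)+i).choose (2*i+2) : ℤ) * ((2*i+2).choose i : ℤ)
        = (-1:ℤ)^i * ((((m+2)+i).choose (2*i+2) : ℤ) * ((2*i+2).choose i : ℤ)) := by ring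
      _ = (-1:ℤ)^i * ((m.choose i : ℤ) * (((m+2)+i).choose m : ℤ)) := by rw [h2]
      _ = (-1:ℤ)^i * (m.choose i : ℤ) * (((m+2)+i).choose m : ℤ) := by ring
  rw [Finset.sum_congr rfl hstep, BLc m (m+2) m]
  simp [ich]

lemma Sc (m : ℕ) :
    ∑ j ∈ range (m+2), (-1:ℤ)^j * (((m+1)+j).choose (2*j) : ℤ) * (catalan j : ℤ) = 0 := by
  have key : ∑ j ∈ range (m+2), (-1:ℤ)^j * (((m+1)+j).choose (2*j) : ℤ)
        * ((catalan j : ℤ) - ((2*j).choose j : ℤ)) = (-1:ℤ)^m := by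
    rw [Finset.sum_range_succ']
    simp only [Nat.mul_zero, Nat.choose_zero_right, Nat.add_zero, catalan_zero, pow_zero]
    have hz : (catalan 0 : ℤ) - ((2*0).choose 0 : ℤ) = 0 := by norm_num
    have hstep : ∀ i ∈ range (m+1),
        (-1:ℤ)^(i+1) * (((m+1)+(i+1)).choose (2*(i+1)) : ℤ)
          * ((catalan (i+1) : ℤ) - ((2*(i+1)).choose (i+1) : ℤ))
        = (-1:ℤ)^i * (((m+2)+i).choose (2*i+2) : ℤ) * ((2*i+2).choose i : ℤ) := by
      intro i _
      have e1 : (m+1)+(i+1) = (m+2)+i := by omega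
      have e2 : 2*(i+1) = 2*i+2 := by omega
      rw [e1, e2]
      rw [cat_shift i]
      ring
    rw [Finset.sum_congr rfl hstep, SE m]
    norm_num
  have hsub := Finset.sum_sub_distrib (s := range (m+2))
    (f := fun j => (-1:ℤ)^j * (((m+1)+j).choose (2*j) : ℤ) * (catalan j : ℤ))
    (g := fun j => (-1:ℤ)^j * (((m+1)+j).choose (2*j) : ℤ) * ((2*j).choose j : ℤ))
  have hd := Sd (m+1)
  have key' : ∑ j ∈ range (m+2), ((-1:ℤ)^j * (((m+1)+j).choose (2*j) : ℤ) * (catalan j : ℤ)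
      - (-1:ℤ)^j * (((m+1)+j).choose (2*j) : ℤ) * ((2*j).choose j : ℤ)) = (-1:ℤ)^m := by
    rw [← key]
    apply Finset.sum_congr rfl
    intro j _
    ring
  rw [hsub] at key'
  have : ((m:ℕ)+1+1) = m+2 := rfl
  rw [hd] at key'
  have hpow : (-1:ℤ)^(m+1) = -(-1:ℤ)^m := by rw [pow_succ]; ring
  linarith [key', hpow]

lemma Sj (m : ℕ) :
    ∑ j ∈ range (m+2), (-1:ℤ)^j * (((m+1)+j).choose (2*j) : ℤ) * ((j:ℤ) * (catalan j : ℤ))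
      = (-1:ℤ)^(m+1) := by
  have hstep : ∀ j ∈ range (m+2),
      (-1:ℤ)^j * (((m+1)+j).choose (2*j) : ℤ) * ((j:ℤ) * (catalan j : ℤ))
      = (-1:ℤ)^j * (((m+1)+j).choose (2*j) : ℤ) * ((2*j).choose j : ℤ)
        - (-1:ℤ)^j * (((m+1)+j).choose (2*j) : ℤ) * (catalan j : ℤ) := by
    intro j _
    rw [cat_mul j]
    ring
  rw [Finset.sum_congr rfl hstep, Finset.sum_sub_distrib, Sd (m+1), Sc m]
  ring

lemma neg_one_sq_pow (j : ℕ) : ((-1:ℤ)^j) * ((-1:ℤ)^j) = 1 := by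
  rw [← pow_add]
  have : j + j = 2*j := by omega
  rw [this, pow_mul]
  norm_num

lemma Plem (r s : ℤ) (m : ℕ) :
    ∑ k ∈ range (m+2), (-1:ℤ)^k * ((2*(m+1)-k).choose k : ℤ)
      * ((catalan (m+1-k) : ℤ) * ((r-s) * ((m+1-k : ℕ) : ℤ) + s)) = r - s := by
  have hrefl := Finset.sum_range_reflect
    (fun k => (-1:ℤ)^k * ((2*(m+1)-k).choose k : ℤ)
      * ((catalan (m+1-k) : ℤ) * ((r-s) * ((m+1-k : ℕ) : ℤ) + s))) (m+2)
  rw [← hrefl]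
  have hstep : ∀ j ∈ range (m+2),
      (-1:ℤ)^(m+2-1-j) * ((2*(m+1)-(m+2-1-j)).choose (m+2-1-j) : ℤ)
        * ((catalan (m+1-(m+2-1-j)) : ℤ) * ((r-s) * ((m+1-(m+2-1-j) : ℕ) : ℤ) + s))
      = (-1:ℤ)^(m+1) * ((r-s) * ((-1:ℤ)^j * (((m+1)+j).choose (2*j) : ℤ) * ((j:ℤ) * (catalan j : ℤ)))
          + s * ((-1:ℤ)^j * (((m+1)+j).choose (2*j) : ℤ) * (catalan j : ℤ))) := by
    intro j hj
    have hj' : j ≤ m+1 := by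
      have := mem_range.mp hj; omega
    have e0 : m+2-1-j = m+1-j := by omega
    have e1 : m+1-(m+1-j) = j := by omega
    have e2 : 2*(m+1)-(m+1-j) = (m+1)+j := by omega
    rw [e0, e1, e2]
    have e3 : ((m+1)+j).choose (m+1-j) = ((m+1)+j).choose (2*j) :=
      Nat.choose_symm_of_eq_add (by omega)
    rw [e3]
    have e4 : (-1:ℤ)^(m+1-j) = (-1:ℤ)^(m+1) * (-1:ℤ)^j := by
      have h5 : (-1:ℤ)^(m+1-j) * (-1:ℤ)^j = (-1:ℤ)^(m+1) := by
        rw [← pow_add]; congr 1; omega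
      calc (-1:ℤ)^(m+1-j) = (-1:ℤ)^(m+1-j) * ((-1:ℤ)^j * (-1:ℤ)^j) := by
            rw [neg_one_sq_pow, mul_one]
        _ = ((-1:ℤ)^(m+1-j) * (-1:ℤ)^j) * (-1:ℤ)^j := by ring
        _ = (-1:ℤ)^(m+1) * (-1:ℤ)^j := by rw [h5]
    rw [e4]
    ring
  rw [Finset.sum_congr rfl hstep, ← Finset.mul_sum, Finset.sum_add_distrib,
    ← Finset.mul_sum, ← Finset.mul_sum, Sj m, Sc m]
  have h6 : (-1:ℤ)^(m+1) * ((r-s) * (-1:ℤ)^(m+1) + s * 0)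
      = (r-s) * ((-1:ℤ)^(m+1) * (-1:ℤ)^(m+1)) := by ring
  rw [h6, neg_one_sq_pow, mul_one]

/-- Any sequence with `f 0 = s`, `f 1 = r` satisfying the Kaplansky-coefficient
recurrence is given by the Catalan closed form `f n = C_n ((r-s) n + s)`. -/
theorem recurrence_unique_solution (r s : ℤ) (f : ℕ → ℤ)
    (h0 : f 0 = s) (h1 : f 1 = r)
    (hrec : ∀ n : ℕ, 2 ≤ n → f n =
      ∑ k ∈ Finset.Icc 1 n, (-1 : ℤ) ^ (k + 1) *
        ((Nat.choose (2 * n - k) k + Nat.choose (2 * n - k - 1) (k - 1) : ℕ) : ℤ) *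
        f (n - k)) :
    ∀ n : ℕ, f n = (catalan n : ℤ) * ((r - s) * (n : ℤ) + s) := by
  intro n
  induction n using Nat.strong_induction_on with
  | _ n IH =>
    rcases n with - | n
    · rw [h0]; simp
    · rcases n with - | m
      · rw [h1]; simp [catalan_one]
      · -- n = m + 2
        rw [hrec (m+2) (by omega)]
        have hIH : ∀ k ∈ Finset.Icc 1 (m+2),
            (-1 : ℤ) ^ (k + 1) *
              ((Nat.choose (2 * (m+2) - k) k + Nat.choose (2 * (m+2) - k - 1) (k - 1) : ℕ) : ℤ) *
              f (m+2 - k)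
            = (-1 : ℤ) ^ (k + 1) *
              ((Nat.choose (2 * (m+2) - k) k + Nat.choose (2 * (m+2) - k - 1) (k - 1) : ℕ) : ℤ) *
              ((catalan (m+2-k) : ℤ) * ((r-s) * ((m+2-k : ℕ) : ℤ) + s)) := by
          intro k hk
          have hk' : 1 ≤ k := (Finset.mem_Icc.mp hk).1
          rw [IH (m+2-k) (by omega)]
        rw [Finset.sum_congr rfl hIH, ← Finset.Ico_add_one_right_eq_Icc, Finset.sum_Ico_eq_sum_range]
        have hrange : m + 2 + 1 - 1 = m + 2 := by omega
        rw [hrange]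
        have hstep : ∀ i ∈ range (m+2),
            (-1 : ℤ) ^ ((1+i) + 1) *
              ((Nat.choose (2 * (m+2) - (1+i)) (1+i)
                + Nat.choose (2 * (m+2) - (1+i) - 1) ((1+i) - 1) : ℕ) : ℤ) *
              ((catalan (m+2-(1+i)) : ℤ) * ((r-s) * ((m+2-(1+i) : ℕ) : ℤ) + s))
            = (-1:ℤ)^i * ((2*(m+2) - (i+1)).choose (i+1) : ℤ)
                * ((catalan (m+1-i) : ℤ) * ((r-s) * ((m+1-i : ℕ) : ℤ) + s))
              + (-1:ℤ)^i * ((2*(m+1) - i).choose i : ℤ)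
                * ((catalan (m+1-i) : ℤ) * ((r-s) * ((m+1-i : ℕ) : ℤ) + s)) := by
          intro i hi
          have e1 : 2 * (m+2) - (1+i) = 2*(m+2) - (i+1) := by omega
          have e2 : 2 * (m+2) - (1+i) - 1 = 2*(m+1) - i := by omega
          have e3 : (1+i) - 1 = i := by omega
          have e4 : m+2-(1+i) = m+1-i := by omega
          have e5 : (-1:ℤ)^((1+i)+1) = (-1:ℤ)^i := by
            have : (1+i)+1 = i+2 := by omega
            rw [this, pow_add]; norm_num
          rw [e2, e1, e3, e4, e5]
          push_cast
          ring
        rw [Finset.sum_congr rfl hstep, Finset.sum_add_distrib]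
        -- second sum is Plem r s m
        have hsum2 : ∑ i ∈ range (m+2), (-1:ℤ)^i * ((2*(m+1) - i).choose i : ℤ)
            * ((catalan (m+1-i) : ℤ) * ((r-s) * ((m+1-i : ℕ) : ℤ) + s)) = r - s := Plem r s m
        -- first sum from Plem r s (m+1)
        have hP := Plem r s (m+1)
        rw [Finset.sum_range_succ'] at hP
        have hstep2 : ∀ i ∈ range (m+2),
            (-1:ℤ)^(i+1) * ((2*(m+2)-(i+1)).choose (i+1) : ℤ)
              * ((catalan (m+2-(i+1)) : ℤ) * ((r-s) * ((m+2-(i+1) : ℕ) : ℤ) + s))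
            = -((-1:ℤ)^i * ((2*(m+2) - (i+1)).choose (i+1) : ℤ)
                * ((catalan (m+1-i) : ℤ) * ((r-s) * ((m+1-i : ℕ) : ℤ) + s))) := by
          intro i hi
          have e4 : m+2-(i+1) = m+1-i := by omega
          rw [e4, pow_succ]
          ring
        rw [Finset.sum_congr rfl hstep2] at hP
        simp only [pow_zero, Nat.sub_zero, Nat.choose_zero_right, Nat.cast_one, one_mul] at hP
        rw [Finset.sum_neg_distrib] at hP
        have hsum1 : ∑ i ∈ range (m+2), (-1:ℤ)^i * ((2*(m+2) - (i+1)).choose (i+1) : ℤ)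
            * ((catalan (m+1-i) : ℤ) * ((r-s) * ((m+1-i : ℕ) : ℤ) + s))
            = (catalan (m+2) : ℤ) * ((r-s) * ((m+2 : ℕ) : ℤ) + s) - (r - s) := by
          have e6 : m+1+1 = m+2 := by omega
          rw [e6] at hP
          linarith [hP]
        rw [hsum1, hsum2]
        push_cast
        ring
end

section
/- For all integers n ≥ 1 and 0 ≤ k ≤ n, the identity (2n - k) · [ binom(2n-k, k) + binom(2n-k-1, k-1) ] · binom(2n-2k, n-k) = 2n · binom(n, k) · binom(2n-k, n) holds, where for k = 0 the term binom(2n-1, -1) is interpreted as 0. -/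
/-- Identity from the proof of Lemma 4.3:
`(2n-k)·[C(2n-k,k)+C(2n-k-1,k-1)]·C(2n-2k,n-k) = 2n·C(n,k)·C(2n-k,n)`,
with the convention `C(2n-1,-1) = 0` when `k = 0`. -/
theorem kaplansky_rewrite (n k : ℕ) (hn : 1 ≤ n) (hk : k ≤ n) :
    (2 * n - k) *
      (Nat.choose (2 * n - k) k +
        if k = 0 then 0 else Nat.choose (2 * n - k - 1) (k - 1)) *
      Nat.choose (2 * n - 2 * k) (n - k)
    = 2 * n * Nat.choose n k * Nat.choose (2 * n - k) n := by
  have hkn : n ≤ 2 * n - k := by omega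
  have hchoose : (2 * n - k).choose n * n.choose k
      = (2 * n - k).choose k * (2 * n - 2 * k).choose (n - k) := by
    have := Nat.choose_mul (n := 2 * n - k) hk
    have h2 : 2 * n - k - k = 2 * n - 2 * k := by omega
    rwa [h2] at this
  rcases Nat.eq_zero_or_pos k with rfl | hkpos
  · rw [if_pos rfl]
    simp only [Nat.mul_zero, Nat.sub_zero, Nat.choose_zero_right, Nat.mul_one,
      Nat.add_zero] at hchoose ⊢
  · rw [if_neg (by omega)]
    have key : (2 * n - k) * Nat.choose (2 * n - k - 1) (k - 1)
        = k * Nat.choose (2 * n - k) k := by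
      have h := Nat.add_one_mul_choose_eq (2 * n - k - 1) (k - 1)
      have h1 : 2 * n - k - 1 + 1 = 2 * n - k := by omega
      have h2 : k - 1 + 1 = k := by omega
      rw [h1, h2] at h
      rw [h]; ring
    have expand : (2 * n - k) *
        (Nat.choose (2 * n - k) k + Nat.choose (2 * n - k - 1) (k - 1))
        = 2 * n * Nat.choose (2 * n - k) k := by
      rw [Nat.mul_add, key]
      have : 2 * n - k + k = 2 * n := by omega
      nlinarith [this]
    rw [expand, Nat.mul_assoc, ← hchoose]
    ring
end

section
/- For every integer n ≥ 1, Σ_{k=0}^{n} (-1)^k [ binom(2n-k, k) + binom(2n-k-1, k-1) ] · binom(2n-2k, n-k) = 0, where for k = 0 the term binom(2n-1, -1) is interpreted as 0. -/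
lemma core_id (m i : ℕ) :
    (m + i + 1) * ((m + 2*i + 2).choose (i+1) * (m + i + 1).choose (i+1)
        + (m + 2*i + 1).choose (i+1) * (m + i).choose (i+1))
      = 2 * (m + 1) * ((m + 2*i + 1).choose i * (m + i + 1).choose i)
        + 2 * m * ((m + 2*i + 2).choose (i+1) * (m + i + 1).choose (i+1)) := by
  have h1 := Nat.choose_mul_succ_eq (m + 2*i + 1) (i+1)
  have h2 := Nat.choose_mul_succ_eq (m + i) (i+1)
  have h3 := Nat.add_one_mul_choose_eq (m + 2*i + 1) i
  have h4 := Nat.choose_succ_right_eq (m + i + 1) i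
  rw [show m + 2*i + 1 + 1 = m + 2*i + 2 by omega,
      show m + 2*i + 2 - (i+1) = m + i + 1 by omega] at h1
  rw [show m + i + 1 - (i+1) = m by omega] at h2
  rw [show m + 2*i + 1 + 1 = m + 2*i + 2 by omega] at h3
  rw [show m + i + 1 - i = m + 1 by omega] at h4
  have hpos : ((m : ℤ) + 2*i + 2) ≠ 0 := by positivity
  have H : ((m : ℤ) + 2*i + 2) * ((m + i + 1) * ((m + 2*i + 2).choose (i+1) * (m + i + 1).choose (i+1)
        + (m + 2*i + 1).choose (i+1) * (m + i).choose (i+1)))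
      = ((m : ℤ) + 2*i + 2) * (2 * (m + 1) * ((m + 2*i + 1).choose i * (m + i + 1).choose i)
        + 2 * m * ((m + 2*i + 2).choose (i+1) * (m + i + 1).choose (i+1))) := by
    have h1' : ((m + 2*i + 1).choose (i+1) : ℤ) * ((m:ℤ) + 2*i + 2)
        = ((m + 2*i + 2).choose (i+1) : ℤ) * ((m:ℤ) + i + 1) := by exact_mod_cast congrArg (Nat.cast : ℕ → ℤ) h1
    have h2' : ((m + i).choose (i+1) : ℤ) * ((m:ℤ) + i + 1)
        = ((m + i + 1).choose (i+1) : ℤ) * (m:ℤ) := by exact_mod_cast congrArg (Nat.cast : ℕ → ℤ) h2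
    have h3' : ((m:ℤ) + 2*i + 2) * ((m + 2*i + 1).choose i : ℤ)
        = ((m + 2*i + 2).choose (i+1) : ℤ) * ((i:ℤ) + 1) := by exact_mod_cast congrArg (Nat.cast : ℕ → ℤ) h3
    have h4' : ((m + i + 1).choose (i+1) : ℤ) * ((i:ℤ) + 1)
        = ((m + i + 1).choose i : ℤ) * ((m:ℤ) + 1) := by exact_mod_cast congrArg (Nat.cast : ℕ → ℤ) h4

    linear_combination ((m:ℤ)+i+1) * ((m + i).choose (i+1) : ℤ) * h1'
      + ((m:ℤ)+i+1) * ((m + 2*i + 2).choose (i+1) : ℤ) * h2'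
      - 2*((m:ℤ)+1) * ((m + i + 1).choose i : ℤ) * h3'
      + 2*((m + 2*i + 2).choose (i+1) : ℤ) * ((i:ℤ)+1) * h4'
  exact_mod_cast mul_left_cancel₀ hpos H

lemma key_id (n k : ℕ) (hn : 1 ≤ n) (hk : k ≤ n) :
    n * ((2*n - k).choose k + (if k = 0 then 0 else (2*n - k - 1).choose (k-1)))
        * (2*n - 2*k).choose (n - k)
      = 2 * (k+1) * ((2*n - k - 1).choose (k+1) * (2*n - 2*k - 2).choose (n - k - 1))
        + 2 * k * ((2*n - k).choose k * (2*n - 2*k).choose (n - k)) := by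
  rcases eq_or_lt_of_le hk with rfl | hlt
  · -- k = n
    rw [if_neg (by omega), show 2*k - k - 1 = k - 1 by omega,
        show 2*k - 2*k - 2 = 0 by omega, show k - k - 1 = 0 by omega,
        show 2*k - k = k by omega, show 2*k - 2*k = 0 by omega,
        show k - k = 0 by omega]
    rw [Nat.choose_self, Nat.choose_self, Nat.choose_eq_zero_of_lt (show k - 1 < k + 1 by omega)]
    simp
    omega
  · obtain ⟨i, rfl⟩ : ∃ i, n = k + i + 1 := ⟨n - k - 1, by omega⟩
    rw [show 2*(k+i+1) - k - 1 = k + 2*i + 1 by omega,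
        show 2*(k+i+1) - 2*k - 2 = 2*i by omega,
        show k + i + 1 - k - 1 = i by omega,
        show 2*(k+i+1) - k = k + 2*i + 2 by omega,
        show 2*(k+i+1) - 2*k = 2*i + 2 by omega,
        show k + i + 1 - k = i + 1 by omega]
    -- F1
    have F1 : (k + 2*i + 2).choose k * (2*i + 2).choose (i+1)
        = (k + 2*i + 2).choose (i+1) * (k + i + 1).choose (i+1) := by
      have hs : (k + 2*i + 2).choose k = (k + 2*i + 2).choose (2*i + 2) := by
        rw [← Nat.choose_symm (show 2*i+2 ≤ k + 2*i + 2 by omega),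
            show k + 2*i + 2 - (2*i+2) = k by omega]
      rw [hs, Nat.choose_mul (n := k + 2*i + 2) (show i+1 ≤ 2*i+2 by omega),
          show k + 2*i + 2 - (i+1) = k + i + 1 by omega, show 2*i + 2 - (i+1) = i + 1 by omega]
    -- F2
    have F2 : (if k = 0 then 0 else (k + 2*i + 1).choose (k-1)) * (2*i + 2).choose (i+1)
        = (k + 2*i + 1).choose (i+1) * (k + i).choose (i+1) := by
      rcases Nat.eq_zero_or_pos k with rfl | hk1
      · simp [Nat.choose_eq_zero_of_lt (show i < i + 1 by omega)]
      · rw [if_neg (by omega)]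
        have hs : (k + 2*i + 1).choose (k-1) = (k + 2*i + 1).choose (2*i + 2) := by
          rw [← Nat.choose_symm (show 2*i+2 ≤ k + 2*i + 1 by omega),
              show k + 2*i + 1 - (2*i+2) = k - 1 by omega]
        rw [hs, Nat.choose_mul (n := k + 2*i + 1) (show i+1 ≤ 2*i+2 by omega),
            show k + 2*i + 1 - (i+1) = k + i by omega, show 2*i + 2 - (i+1) = i + 1 by omega]
    -- F3
    have F3 : (k + 2*i + 1).choose (k+1) * (2*i).choose i
        = (k + 2*i + 1).choose i * (k + i + 1).choose i := by
      have hs : (k + 2*i + 1).choose (k+1) = (k + 2*i + 1).choose (2*i) := by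
        rw [← Nat.choose_symm (show 2*i ≤ k + 2*i + 1 by omega),
            show k + 2*i + 1 - 2*i = k + 1 by omega]
      rw [hs, Nat.choose_mul (n := k + 2*i + 1) (show i ≤ 2*i by omega),
          show k + 2*i + 1 - i = k + i + 1 by omega, show 2*i - i = i by omega]
    calc (k+i+1) * ((k + 2*i + 2).choose k + (if k = 0 then 0 else (k + 2*i + 1).choose (k-1)))
            * (2*i + 2).choose (i+1)
        = (k+i+1) * ((k + 2*i + 2).choose k * (2*i + 2).choose (i+1)
            + (if k = 0 then 0 else (k + 2*i + 1).choose (k-1)) * (2*i + 2).choose (i+1)) := by ring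
      _ = (k+i+1) * ((k + 2*i + 2).choose (i+1) * (k + i + 1).choose (i+1)
            + (k + 2*i + 1).choose (i+1) * (k + i).choose (i+1)) := by rw [F1, F2]
      _ = 2 * (k + 1) * ((k + 2*i + 1).choose i * (k + i + 1).choose i)
            + 2 * k * ((k + 2*i + 2).choose (i+1) * (k + i + 1).choose (i+1)) := core_id k i
      _ = 2 * (k+1) * ((k + 2*i + 1).choose (k+1) * (2*i).choose i)
            + 2 * k * ((k + 2*i + 2).choose k * (2*i + 2).choose (i+1)) := by rw [F1, F3]

/-- Lemma 4.3 as a vanishing alternating sum, including the `k = 0` term,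
with the convention `C(2n-1,-1) = 0` when `k = 0`. -/
theorem alternating_kaplansky_sum_eq_zero (n : ℕ) (hn : 1 ≤ n) :
    ∑ k ∈ Finset.range (n + 1), (-1 : ℤ) ^ k *
      ((Nat.choose (2 * n - k) k +
          (if k = 0 then 0 else Nat.choose (2 * n - k - 1) (k - 1)) : ℕ) : ℤ) *
      ((Nat.choose (2 * n - 2 * k) (n - k) : ℕ) : ℤ) = 0 := by
  set g : ℕ → ℤ := fun k =>
    (-1) ^ (k+1) * (2*k) * ((2*n - k).choose k : ℤ) * ((2*n - 2*k).choose (n - k) : ℤ) with hg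
  have hsum : (n : ℤ) * (∑ k ∈ Finset.range (n + 1), (-1 : ℤ) ^ k *
      ((Nat.choose (2 * n - k) k +
          (if k = 0 then 0 else Nat.choose (2 * n - k - 1) (k - 1)) : ℕ) : ℤ) *
      ((Nat.choose (2 * n - 2 * k) (n - k) : ℕ) : ℤ)) = 0 := by
    rw [Finset.mul_sum]
    have step : ∀ k ∈ Finset.range (n+1),
        (n : ℤ) * ((-1 : ℤ) ^ k *
          ((Nat.choose (2 * n - k) k +
              (if k = 0 then 0 else Nat.choose (2 * n - k - 1) (k - 1)) : ℕ) : ℤ) *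
          ((Nat.choose (2 * n - 2 * k) (n - k) : ℕ) : ℤ)) = g (k+1) - g k := by
      intro k hk
      have hk' : k ≤ n := by simpa using Nat.lt_succ_iff.mp (Finset.mem_range.mp hk)
      have hkey := congrArg (Nat.cast : ℕ → ℤ) (key_id n k hn hk')
      push_cast at hkey
      simp only [hg]
      rw [show 2*n - (k+1) = 2*n - k - 1 by omega,
          show 2*n - 2*(k+1) = 2*n - 2*k - 2 by omega,
          show n - (k+1) = n - k - 1 by omega]
      push_cast
      linear_combination (-1 : ℤ)^k * hkey
    rw [Finset.sum_congr rfl step, Finset.sum_range_sub g (n+1)]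
    simp only [hg]
    rw [show 2*n - (n+1) = n - 1 by omega]
    rw [Nat.choose_eq_zero_of_lt (show n - 1 < n + 1 by omega)]
    push_cast
    ring
  have hn' : (n : ℤ) ≠ 0 := by positivity
  exact (mul_eq_zero.mp hsum).resolve_left hn'
end

section
/- For every integer n ≥ 1, the rational number S_n := Σ_{k=0}^{n} (-1)^{n-k} · binom(n, n-k) · binom(n+k, n) / (n + k) equals 0. -/
open Polynomial Finset

lemma keyA (n : ℕ) (hn : 1 ≤ n) :
    ∑ k ∈ Finset.range (n + 1), (-1 : ℚ) ^ (n - k) *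
      (Nat.choose n k : ℚ) * (Nat.choose (n + k - 1) (n - 1) : ℚ) = 0 := by
  have hpoly : ((1 : ℚ[X]) + X) ^ (n - 1) * X ^ n
      = ∑ k ∈ Finset.range (n + 1),
          Polynomial.C ((-1 : ℚ) ^ (n - k) * (Nat.choose n k : ℚ)) * (1 + X) ^ (n + k - 1) := by
    have h := add_pow (1 + X : ℚ[X]) (-1) n
    have h1 : ((1:ℚ[X]) + X + -1) = X := by ring
    rw [h1] at h
    calc (1 + X : ℚ[X]) ^ (n-1) * X ^ n
        = (1+X)^(n-1) * ∑ k ∈ range (n+1), (1+X)^k * (-1)^(n-k) * (n.choose k : ℚ[X]) := by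
          rw [h]
      _ = _ := by
          rw [Finset.mul_sum]
          refine Finset.sum_congr rfl fun k hk => ?_
          have hnk : n + k - 1 = (n-1) + k := by omega
          rw [hnk, pow_add]
          simp [map_mul, map_pow, map_natCast]
          ring
  have hc := congrArg (fun p => Polynomial.coeff p (n-1)) hpoly
  simp only [Polynomial.finset_sum_coeff, Polynomial.coeff_C_mul] at hc
  rw [Polynomial.coeff_mul_X_pow'] at hc
  simp only [if_neg (by omega : ¬ n ≤ n - 1)] at hc
  have : ∀ k ∈ range (n+1), (-1 : ℚ) ^ (n - k) * (Nat.choose n k : ℚ) *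
      (Nat.choose (n + k - 1) (n - 1) : ℚ)
      = (-1 : ℚ) ^ (n - k) * (Nat.choose n k : ℚ) * ((1 + X : ℚ[X]) ^ (n + k - 1)).coeff (n-1) := by
    intro k hk
    rw [Polynomial.coeff_one_add_X_pow]
  rw [Finset.sum_congr rfl this]
  simp only [mul_assoc] at hc ⊢
  exact hc.symm

/-- The quantity `S_n = Σ_{k=0}^n (-1)^{n-k} C(n,n-k) C(n+k,n) / (n+k)` vanishes. -/
theorem S_n_eq_zero (n : ℕ) (hn : 1 ≤ n) :
    ∑ k ∈ Finset.range (n + 1), (-1 : ℚ) ^ (n - k) *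
      (Nat.choose n (n - k) : ℚ) * (Nat.choose (n + k) n : ℚ) / ((n + k : ℕ) : ℚ) = 0 := by
  have hn0 : (n : ℚ) ≠ 0 := Nat.cast_ne_zero.mpr (by omega)
  have := keyA n hn
  calc ∑ k ∈ Finset.range (n + 1), (-1 : ℚ) ^ (n - k) *
      (Nat.choose n (n - k) : ℚ) * (Nat.choose (n + k) n : ℚ) / ((n + k : ℕ) : ℚ)
      = ∑ k ∈ Finset.range (n + 1), ((-1 : ℚ) ^ (n - k) *
      (Nat.choose n k : ℚ) * (Nat.choose (n + k - 1) (n - 1) : ℚ)) / (n : ℚ) := by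
        refine Finset.sum_congr rfl fun k hk => ?_
        have hk' : k ≤ n := by simpa [Nat.lt_succ_iff] using hk
        rw [Nat.choose_symm hk']
        have hnk : ((n + k : ℕ) : ℚ) ≠ 0 := by positivity
        have hnat : (n + k) * Nat.choose (n + k - 1) (n - 1) = Nat.choose (n + k) n * n := by
          have := Nat.add_one_mul_choose_eq (n + k - 1) (n - 1)
          have e1 : n + k - 1 + 1 = n + k := by omega
          have e2 : n - 1 + 1 = n := by omega
          simp only [Nat.succ_eq_add_one, e1, e2] at this
          linarith [this]
        have hq : ((n + k : ℕ) : ℚ) * (Nat.choose (n + k - 1) (n - 1) : ℚ)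
            = (Nat.choose (n + k) n : ℚ) * n := by exact_mod_cast hnat
        have key : (Nat.choose (n + k) n : ℚ) / ((n + k : ℕ) : ℚ)
            = (Nat.choose (n + k - 1) (n - 1) : ℚ) / (n : ℚ) := by
          rw [div_eq_div_iff hnk hn0]; linarith [hq]
        rw [mul_div_assoc, key, ← mul_div_assoc]
      _ = 0 := by rw [← Finset.sum_div, this, zero_div]
end
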